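/- Let v ∈ ℝ^q, let (x^v, z^v) be an optimal solution of (P(v)) and let w^v be an optimal solution of (D(v)) with w^v ≠ 0. Then the halfspace H := {y ∈ ℝ^q : (w^v)ᵀy ≥ (w^v)ᵀΓ(x^v)} contains the upper image P; moreover bd H supports P both at Γ(x^v) and at y^v := v + z^v, and in particular (w^v)ᵀΓ(x^v) = (w^v)ᵀ(v + z^v). -/

import Mathlib

open Set Pointwise

noncomputable section

/-- Dot product on `Fin q → ℝ`. -/
def dotp {q : ℕ} (w y : Fin q → ℝ) : ℝ := ∑ i, w i * y i

/-- `N` is a norm on `Fin q → ℝ`. -/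
def IsNormFn {q : ℕ} (N : (Fin q → ℝ) → ℝ) : Prop :=
  (∀ z, N z = 0 ↔ z = 0) ∧ (∀ (a : ℝ) (z : Fin q → ℝ), N (a • z) = |a| * N z) ∧
    (∀ z w, N (z + w) ≤ N z + N w)

/-- Dual norm of `N`. -/
def dualNormFn {q : ℕ} (N : (Fin q → ℝ) → ℝ) (w : Fin q → ℝ) : ℝ :=
  sSup ((fun z => dotp w z) '' {z | N z ≤ 1})

/-- Distance (w.r.t. the norm `N`) from a point to a set. -/
def distFn {q : ℕ} (N : (Fin q → ℝ) → ℝ) (v : Fin q → ℝ) (A : Set (Fin q → ℝ)) : ℝ :=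
  sInf ((fun y => N (v - y)) '' A)

/-- Dual cone of a set. -/
def dualCone' {q : ℕ} (C : Set (Fin q → ℝ)) : Set (Fin q → ℝ) :=
  {w | ∀ y ∈ C, 0 ≤ dotp w y}

variable {q : ℕ} {N : (Fin q → ℝ) → ℝ}

lemma N_zero (hN : IsNormFn N) : N 0 = 0 := (hN.1 0).2 rfl

lemma N_nonneg (hN : IsNormFn N) (z : Fin q → ℝ) : 0 ≤ N z := by
  have h := hN.2.2 z (-z)
  have h2 : N (-z) = N z := by
    have := hN.2.1 (-1) z; simpa using this
  have h0 : N (z + -z) = 0 := by simpa using N_zero hN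
  nlinarith [h, h2, h0]

lemma N_sum_le (hN : IsNormFn N) {ι : Type*} (s : Finset ι) (f : ι → (Fin q → ℝ)) :
    N (∑ i ∈ s, f i) ≤ ∑ i ∈ s, N (f i) := by
  classical
  induction s using Finset.induction with
  | empty => simp [N_zero hN]
  | insert _ _ hx ih =>
      rename_i a s
      rw [Finset.sum_insert hx, Finset.sum_insert hx]
      exact le_trans (hN.2.2 _ _) (by linarith)

lemma N_le_bound (hN : IsNormFn N) :
    ∃ M : ℝ, 0 ≤ M ∧ ∀ z, N z ≤ M * ‖z‖ := by
  refine ⟨∑ i, N ((Pi.single i 1 : Fin q → ℝ)), Finset.sum_nonneg fun i _ => N_nonneg hN _, fun z => ?_⟩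
  have hz : z = ∑ i, z i • (Pi.single i 1 : Fin q → ℝ) := by
    funext j
    simp [Finset.sum_apply, Pi.single_apply]
  calc N z = N (∑ i, z i • (Pi.single i 1 : Fin q → ℝ)) := by rw [← hz]
    _ ≤ ∑ i, N (z i • (Pi.single i 1 : Fin q → ℝ)) := N_sum_le hN _ _
    _ ≤ ∑ i, N ((Pi.single i 1 : Fin q → ℝ)) * ‖z‖ := by
        refine Finset.sum_le_sum fun i _ => ?_
        rw [hN.2.1]
        have h1 : |z i| ≤ ‖z‖ := by
          simpa using norm_le_pi_norm z i
        have := N_nonneg hN (Pi.single i (1:ℝ))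
        nlinarith
    _ = (∑ i, N ((Pi.single i 1 : Fin q → ℝ))) * ‖z‖ := by rw [Finset.sum_mul]

lemma N_continuous (hN : IsNormFn N) : Continuous N := by
  obtain ⟨M, hM0, hM⟩ := N_le_bound hN
  have hlip : LipschitzWith (Real.toNNReal M) N := by
    refine LipschitzWith.of_dist_le_mul fun x y => ?_
    have h1 : N x ≤ N (x - y) + N y := by
      have := hN.2.2 (x - y) y; simpa using this
    have h2 : N y ≤ N (y - x) + N x := by
      have := hN.2.2 (y - x) x; simpa using this
    have h3 : N (y - x) = N (x - y) := by
      have := hN.2.1 (-1) (x - y); simpa [neg_sub] using this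
    have h4 : N (x - y) ≤ M * ‖x - y‖ := hM _
    rw [Real.dist_eq, Real.coe_toNNReal M hM0, dist_eq_norm]
    rw [abs_sub_le_iff]
    constructor <;> nlinarith
  exact hlip.continuous

lemma N_lower (hq : 0 < q) (hN : IsNormFn N) :
    ∃ c : ℝ, 0 < c ∧ ∀ z, c * ‖z‖ ≤ N z := by
  haveI : Nonempty (Fin q) := ⟨⟨0, hq⟩⟩
  have hsph : (Metric.sphere (0 : Fin q → ℝ) 1).Nonempty :=
    NormedSpace.sphere_nonempty.2 zero_le_one
  have hcomp : IsCompact (Metric.sphere (0 : Fin q → ℝ) 1) := isCompact_sphere _ _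
  obtain ⟨z₀, hz₀, hmin⟩ := hcomp.exists_isMinOn hsph (N_continuous hN).continuousOn
  have hz₀norm : ‖z₀‖ = 1 := by simpa using hz₀
  have hz₀ne : z₀ ≠ 0 := by
    intro h; rw [h] at hz₀norm; simp at hz₀norm
  have hc : 0 < N z₀ := by
    rcases lt_or_eq_of_le (N_nonneg hN z₀) with h | h
    · exact h
    · exact absurd ((hN.1 z₀).1 h.symm) hz₀ne
  refine ⟨N z₀, hc, fun z => ?_⟩
  rcases eq_or_ne z 0 with rfl | hz
  · simp [N_zero hN]
  · have hnz : (0:ℝ) < ‖z‖ := norm_pos_iff.2 hz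
    have hmem : ‖z‖⁻¹ • z ∈ Metric.sphere (0 : Fin q → ℝ) 1 := by
      simp [norm_smul, abs_of_pos (inv_pos.2 hnz), inv_mul_cancel₀ hnz.ne']
    have h1 : N z₀ ≤ N (‖z‖⁻¹ • z) := hmin hmem
    rw [hN.2.1, abs_of_pos (inv_pos.2 hnz)] at h1
    calc N z₀ * ‖z‖ ≤ ‖z‖⁻¹ * N z * ‖z‖ := by nlinarith
      _ = N z := by field_simp

lemma dotp_add (w a b : Fin q → ℝ) : dotp w (a + b) = dotp w a + dotp w b := by
  simp [dotp, mul_add, Finset.sum_add_distrib]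

lemma dotp_sub (w a b : Fin q → ℝ) : dotp w (a - b) = dotp w a - dotp w b := by
  simp [dotp, mul_sub, Finset.sum_sub_distrib]

lemma dotp_smul (w : Fin q → ℝ) (t : ℝ) (a : Fin q → ℝ) : dotp w (t • a) = t * dotp w a := by
  simp [dotp, Finset.mul_sum, mul_comm, mul_left_comm]

lemma dotp_le_norm (w z : Fin q → ℝ) : dotp w z ≤ (∑ i, |w i|) * ‖z‖ := by
  calc dotp w z ≤ ∑ i, |w i * z i| := Finset.sum_le_sum fun i _ => le_abs_self _
    _ ≤ ∑ i, |w i| * ‖z‖ := by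
        refine Finset.sum_le_sum fun i _ => ?_
        rw [abs_mul]
        have h1 : |z i| ≤ ‖z‖ := by simpa using norm_le_pi_norm z i
        have := abs_nonneg (w i); nlinarith
    _ = (∑ i, |w i|) * ‖z‖ := by rw [Finset.sum_mul]


/-- the halfspace `H = {y : (wv)ᵀ y ≥ (wv)ᵀ Γ(xv)}` contains the upper
image `P` and its boundary hyperplane supports `P` both at `Γ(xv)` and at `v + zv`. -/
theorem stmt7 {q n : ℕ}
    (N : (Fin q → ℝ) → ℝ) (hN : IsNormFn N)
    (C : Set (Fin q → ℝ))
    (hCclosed : IsClosed C) (hCconv : Convex ℝ C)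
    (hCcone : ∀ t : ℝ, 0 ≤ t → ∀ y ∈ C, t • y ∈ C)
    (hCsolid : (interior C).Nonempty)
    (hCpointed : ∀ y ∈ C, -y ∈ C → y = 0)
    (hCnontriv : {(0 : Fin q → ℝ)} ⊂ C ∧ C ⊂ Set.univ)
    (X : Set (Fin n → ℝ)) (hX : IsCompact X) (hXconv : Convex ℝ X)
    (hXint : (interior X).Nonempty)
    (Γ : (Fin n → ℝ) → (Fin q → ℝ)) (hΓ : ContinuousOn Γ X)
    (hΓconv : ∀ x₁ ∈ X, ∀ x₂ ∈ X, ∀ t : ℝ, t ∈ Icc (0:ℝ) 1 →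
      t • Γ x₁ + (1 - t) • Γ x₂ - Γ (t • x₁ + (1 - t) • x₂) ∈ C)
    (v : Fin q → ℝ) (xv : Fin n → ℝ) (zv : Fin q → ℝ) (wv : Fin q → ℝ)
    (hxv : xv ∈ X) (hfeas : v + zv - Γ xv ∈ C)
    (hzopt : N zv = distFn N v (Γ '' X + C))
    (hwv : wv ∈ dualCone' C) (hwnorm : dualNormFn N wv ≤ 1)
    (hwopt : sInf ((fun x => dotp wv (Γ x)) '' X) - dotp wv v
      = distFn N v (Γ '' X + C))
    (hwv0 : wv ≠ 0) :
    Γ '' X + C ⊆ {y | dotp wv (Γ xv) ≤ dotp wv y} ∧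
    Γ xv ∈ Γ '' X + C ∧
    v + zv ∈ Γ '' X + C ∧
    dotp wv (Γ xv) = dotp wv (v + zv) := by
  have hq : 0 < q := by
    rcases Nat.eq_zero_or_pos q with h | h
    · subst h
      exact absurd (funext fun i => absurd i.isLt (Nat.not_lt_zero _)) hwv0
    · exact h
  have h0C : (0 : Fin q → ℝ) ∈ C := hCnontriv.1.subset rfl
  set d := distFn N v (Γ '' X + C) with hd
  set I := sInf ((fun x => dotp wv (Γ x)) '' X) with hI
  -- membership facts
  have hΓxvP : Γ xv ∈ Γ '' X + C := by
    have := Set.add_mem_add (Set.mem_image_of_mem Γ hxv) h0C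
    simpa using this
  have hvzP : v + zv ∈ Γ '' X + C := by
    have := Set.add_mem_add (Set.mem_image_of_mem Γ hxv) hfeas
    simpa using this
  -- bddBelow of the scalarized image
  have hdc : Continuous (fun y : Fin q → ℝ => dotp wv y) :=
    continuous_finset_sum _ fun i _ => (continuous_const.mul (continuous_apply i))
  have hbb : BddBelow ((fun x => dotp wv (Γ x)) '' X) :=
    (hX.image_of_continuousOn (hdc.comp_continuousOn hΓ)).bddBelow
  have hIle : I ≤ dotp wv (Γ xv) := csInf_le hbb ⟨xv, hxv, rfl⟩
  have h1 : dotp wv (Γ xv) ≤ dotp wv (v + zv) := by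
    have h0 := hwv _ hfeas
    rw [dotp_sub] at h0; linarith
  -- dual norm bound : dotp wv zv ≤ d
  have h2 : dotp wv zv ≤ d := by
    rcases eq_or_ne (N zv) 0 with h | h
    · have hz0 : zv = 0 := (hN.1 zv).1 h
      have : dotp wv zv = 0 := by simp [hz0, dotp]
      rw [this, ← hzopt, h]
    · have ht : 0 < N zv := lt_of_le_of_ne (N_nonneg hN zv) (Ne.symm h)
      obtain ⟨c, hc, hlow⟩ := N_lower hq hN
      have hwsum : 0 ≤ ∑ i, |wv i| := Finset.sum_nonneg fun i _ => abs_nonneg _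
      have hbdd : BddAbove ((fun z => dotp wv z) '' {z | N z ≤ 1}) := by
        refine ⟨(∑ i, |wv i|) * c⁻¹, ?_⟩
        rintro r ⟨z, hz, rfl⟩
        have hz1 : N z ≤ 1 := hz
        have hzn : ‖z‖ ≤ c⁻¹ := by
          have h1 : c * ‖z‖ ≤ 1 := le_trans (hlow z) hz1
          have h2 : c⁻¹ * (c * ‖z‖) ≤ c⁻¹ * 1 :=
            mul_le_mul_of_nonneg_left h1 (inv_pos.2 hc).le
          calc ‖z‖ = c⁻¹ * (c * ‖z‖) := by field_simp
            _ ≤ c⁻¹ := by linarith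
        have := dotp_le_norm wv z
        nlinarith [norm_nonneg z]
      have hmem : N ((N zv)⁻¹ • zv) ≤ 1 := by
        rw [hN.2.1, abs_of_pos (inv_pos.2 ht), inv_mul_cancel₀ ht.ne']
      have hle : dotp wv ((N zv)⁻¹ • zv) ≤ dualNormFn N wv :=
        le_csSup hbdd ⟨_, hmem, rfl⟩
      rw [dotp_smul] at hle
      have : dotp wv zv ≤ N zv := by
        have h4 := le_trans hle hwnorm
        have h3 := mul_le_mul_of_nonneg_left h4 ht.le
        rw [← mul_assoc, mul_inv_cancel₀ ht.ne', one_mul, mul_one] at h3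
        exact h3
      rw [hzopt] at this; exact this
  have hIeq : I = d + dotp wv v := by rw [hI]; linarith [hwopt]
  have hadd : dotp wv (v + zv) = dotp wv v + dotp wv zv := dotp_add _ _ _
  have heq : dotp wv (Γ xv) = dotp wv (v + zv) := by linarith
  have hxvI : dotp wv (Γ xv) = I := by linarith
  refine ⟨?_, hΓxvP, hvzP, heq⟩
  rintro y ⟨a, ha, c', hc', rfl⟩
  obtain ⟨x, hx, rfl⟩ := ha
  have hIx : I ≤ dotp wv (Γ x) := csInf_le hbb ⟨x, hx, rfl⟩
  have hc'0 : 0 ≤ dotp wv c' := hwv _ hc'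
  show dotp wv (Γ xv) ≤ dotp wv (Γ x + c')
  rw [dotp_add]; linarith
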